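/- For a congestion game with linear latency functions f_e(x) = a_{e,1}x + a_{e,0} (non-negative coefficients), if S is a q-approximate equilibrium with q ≥ 1 and S* is any other state, then the total player cost satisfies Σ_{u∈N} Σ_{e∈s_u} (a_{e,1}·n_e(S) + a_{e,0}) ≤ q · Σ_{e∈E} (a_{e,1}·n_e(S*)·(n_e(S)+1) + a_{e,0}·n_e(S*)). -/

import Mathlib

open Finset

/-- Number of players using resource `e` at state `S`. -/
def congCount {ι ε : Type*} [Fintype ι] [DecidableEq ε]
    (S : ι → Finset ε) (e : ε) : ℕ :=
  (Finset.univ.filter fun u => e ∈ S u).card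

/-- Cost of player `u` at state `S` in a congestion game with linear latencies. -/
def linCost {ι ε : Type*} [Fintype ι] [DecidableEq ε]
    (a1 a0 : ε → ℝ) (S : ι → Finset ε) (u : ι) : ℝ :=
  ∑ e ∈ S u, (a1 e * (congCount S e : ℝ) + a0 e)

lemma congCount_update_le {ι ε : Type*} [Fintype ι] [DecidableEq ι] [DecidableEq ε]
    (S : ι → Finset ε) (u : ι) (s' : Finset ε) (e : ε) :
    congCount (Function.update S u s') e ≤ congCount S e + 1 := by
  unfold congCount
  calc (univ.filter fun v => e ∈ Function.update S u s' v).card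
      ≤ (insert u (univ.filter fun v => e ∈ S v)).card := by
        apply Finset.card_le_card
        intro v hv
        simp only [mem_filter, mem_univ, true_and] at hv
        by_cases h : v = u
        · simp [h]
        · rw [Function.update_of_ne h] at hv
          simp [mem_filter, hv]
    _ ≤ _ := by
        apply le_trans (Finset.card_insert_le _ _)
        simp

lemma sum_sum_eq {ι ε : Type*} [Fintype ι] [Fintype ε] [DecidableEq ε]
    (T : ι → Finset ε) (g : ε → ℝ) :
    ∑ u : ι, ∑ e ∈ T u, g e = ∑ e : ε, (congCount T e : ℝ) * g e := by
  have h1 : ∀ u : ι, ∑ e ∈ T u, g e = ∑ e : ε, if e ∈ T u then g e else 0 := by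
    intro u
    rw [Finset.sum_ite_mem, Finset.univ_inter]
  simp_rw [h1]
  rw [Finset.sum_comm]
  congr 1
  ext e
  rw [Finset.sum_ite, Finset.sum_const_zero, add_zero, Finset.sum_const,
    nsmul_eq_mul]
  rfl

theorem stmt8 {ι ε : Type*} [Fintype ι] [Fintype ε] [DecidableEq ι] [DecidableEq ε]
    (Strat : ι → Finset (Finset ε)) (a1 a0 : ε → ℝ)
    (h1 : ∀ e, 0 ≤ a1 e) (h0 : ∀ e, 0 ≤ a0 e)
    (q : ℝ) (hq1 : 1 ≤ q)
    (S Sstar : ι → Finset ε)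
    (hS : ∀ u, S u ∈ Strat u) (hSstar : ∀ u, Sstar u ∈ Strat u)
    (happrox : ∀ u, ∀ s' ∈ Strat u,
      linCost a1 a0 S u ≤ q * linCost a1 a0 (Function.update S u s') u) :
    (∑ u : ι, ∑ e ∈ S u, (a1 e * (congCount S e : ℝ) + a0 e)) ≤
      q * ∑ e : ε, (a1 e * (congCount Sstar e : ℝ) * ((congCount S e : ℝ) + 1)
        + a0 e * (congCount Sstar e : ℝ)) := by
  have hq0 : 0 ≤ q := le_trans zero_le_one hq1
  have step1 : (∑ u : ι, ∑ e ∈ S u, (a1 e * (congCount S e : ℝ) + a0 e)) ≤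
      ∑ u : ι, q * linCost a1 a0 (Function.update S u (Sstar u)) u := by
    apply Finset.sum_le_sum
    intro u _
    exact happrox u (Sstar u) (hSstar u)
  refine le_trans step1 ?_
  rw [← Finset.mul_sum]
  apply mul_le_mul_of_nonneg_left _ hq0
  have step2 : ∑ u : ι, linCost a1 a0 (Function.update S u (Sstar u)) u ≤
      ∑ u : ι, ∑ e ∈ Sstar u, (a1 e * ((congCount S e : ℝ) + 1) + a0 e) := by
    apply Finset.sum_le_sum
    intro u _
    unfold linCost
    rw [Function.update_self]
    apply Finset.sum_le_sum
    intro e _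
    have hc : (congCount (Function.update S u (Sstar u)) e : ℝ) ≤
        (congCount S e : ℝ) + 1 := by
      exact_mod_cast congCount_update_le S u (Sstar u) e
    have := mul_le_mul_of_nonneg_left hc (h1 e)
    linarith
  refine le_trans step2 ?_
  rw [sum_sum_eq Sstar (fun e => a1 e * ((congCount S e : ℝ) + 1) + a0 e)]
  apply le_of_eq
  apply Finset.sum_congr rfl
  intro e _
  ring
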